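/- Let R and S be integers and ℓ an odd prime with ℓ ∤ RS. Let e ≥ 1 and J ≥ 1 be integers and let w be a unit modulo ℓ^e. Set V = #{(v₁, …, v_J) ∈ ((ℤ/ℓ^eℤ)^×)^J : ∏_{i=1}^J (R·v_i + S) ≡ w (mod ℓ^e)}. Then |φ(ℓ^e)·V − (φ(ℓ^e) − ℓ^{e−1})^J| ≤ 2·ℓ^e·(ℓ^{e−1})^{J−1}. -/

import Mathlib

lemma fiberCardMul {G H : Type*} [Group G] [Group H] (f : G →* H)
    (hf : Function.Surjective f) (y : H) :
    Nat.card {g : G // f g = y} * Nat.card H = Nat.card G := by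
  obtain ⟨g₀, hg₀⟩ := hf y
  have e1 : {g : G // f g = y} ≃ f.ker :=
    Equiv.subtypeEquiv (Equiv.mulRight g₀⁻¹) (fun g => by
      simp [MonoidHom.mem_ker, hg₀, mul_inv_eq_one])
  rw [Nat.card_congr e1, ← Nat.card_congr (QuotientGroup.quotientKerEquivOfSurjective f hf).toEquiv,
    mul_comm]
  exact (Subgroup.card_eq_card_quotient_mul_card_subgroup f.ker).symm

lemma unitsFiberCard (ℓ : ℕ) (hℓ : ℓ.Prime) (e : ℕ) (he : 1 ≤ e) (hd : ℓ ∣ ℓ^e) (y : ZMod ℓ) :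
    Nat.card {u : (ZMod (ℓ^e))ˣ //
        (ZMod.castHom hd (ZMod ℓ)) (u : ZMod (ℓ^e)) = y}
      = if y = 0 then 0 else ℓ^(e-1) := by
  haveI : Fact ℓ.Prime := ⟨hℓ⟩
  haveI : NeZero (ℓ^e) := ⟨pow_ne_zero e hℓ.pos.ne'⟩
  have key : ∀ u : (ZMod (ℓ^e))ˣ,
      (ZMod.castHom hd (ZMod ℓ)) (u : ZMod (ℓ^e)) = ((ZMod.unitsMap hd u : (ZMod ℓ)ˣ) : ZMod ℓ) :=
    fun u => rfl
  rcases eq_or_ne y 0 with rfl | hy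
  · rw [if_pos rfl]
    rw [Nat.card_eq_zero]
    left
    refine ⟨fun u => ?_⟩
    have := u.2
    rw [key] at this
    exact (ZMod.unitsMap hd u.1).ne_zero this
  · rw [if_neg hy]
    have hyu : IsUnit y := isUnit_iff_ne_zero.mpr hy
    have e2 : {u : (ZMod (ℓ^e))ˣ // (ZMod.castHom hd (ZMod ℓ)) (u : ZMod (ℓ^e)) = y}
        ≃ {u : (ZMod (ℓ^e))ˣ // ZMod.unitsMap hd u = hyu.unit} :=
      Equiv.subtypeEquiv (Equiv.refl _) (fun u => by
        rw [Equiv.refl_apply, key, Units.ext_iff, IsUnit.unit_spec])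
    have h3 := fiberCardMul (ZMod.unitsMap hd) (ZMod.unitsMap_surjective hd) hyu.unit
    have c1 : Nat.card (ZMod ℓ)ˣ = ℓ - 1 := by
      rw [Nat.card_eq_fintype_card, ZMod.card_units_eq_totient, Nat.totient_prime hℓ]
    have c2 : Nat.card (ZMod (ℓ^e))ˣ = ℓ^(e-1) * (ℓ - 1) := by
      rw [Nat.card_eq_fintype_card, ZMod.card_units_eq_totient, Nat.totient_prime_pow hℓ he]
    rw [c1, c2] at h3
    rw [Nat.card_congr e2]
    exact Nat.eq_of_mul_eq_mul_right (Nat.sub_pos_of_lt hℓ.one_lt) h3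

lemma isUnitIffCast (ℓ : ℕ) (hℓ : ℓ.Prime) (e : ℕ) (he : 1 ≤ e) (hd : ℓ ∣ ℓ^e) (x : ZMod (ℓ^e)) :
    IsUnit x ↔ (ZMod.castHom hd (ZMod ℓ)) x ≠ 0 := by
  haveI : NeZero (ℓ^e) := ⟨pow_ne_zero e hℓ.pos.ne'⟩
  have h1 : (ZMod.castHom hd (ZMod ℓ)) x = ((x.val : ZMod ℓ)) := by
    rw [ZMod.castHom_apply, ← ZMod.natCast_val]
  rw [h1, Ne, ZMod.natCast_eq_zero_iff]
  conv_lhs => rw [← ZMod.natCast_zmod_val x]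
  rw [ZMod.isUnit_iff_coprime, Nat.coprime_pow_right_iff he _ _, Nat.coprime_comm]
  exact Nat.Prime.coprime_iff_not_dvd hℓ

lemma stepSum {α M : Type*} [Fintype α] [DecidableEq α] [CommMonoid M] [DecidableEq M]
    (c : α → M) (t : M) (k : ℕ) :
    Nat.card {v : Fin (k+1) → α // ∏ i, c (v i) = t}
      = ∑ u : α, Nat.card {g : Fin k → α // c u * (∏ i, c (g i)) = t} := by
  have e1 : {v : Fin (k+1) → α // ∏ i, c (v i) = t}
      ≃ Σ u : α, {g : Fin k → α // c u * (∏ i, c (g i)) = t} :=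
    (Equiv.subtypeEquiv (Fin.consEquiv (fun _ => α)).symm (fun v => by
      simp only [Fin.consEquiv, Equiv.coe_fn_symm_mk]
      rw [Fin.prod_univ_succ]; rfl)).trans
      (Equiv.subtypeProdEquivSigmaSubtype (fun (u : α) (g : Fin k → α) => c u * (∏ i, c (g i)) = t))
  rw [Nat.card_congr e1, Nat.card_eq_fintype_card, Fintype.card_sigma]
  exact Finset.sum_congr rfl fun u _ => (Nat.card_eq_fintype_card).symm

lemma countC (R S : ℤ) (ℓ : ℕ) (hℓ : ℓ.Prime) (hR : ¬ (ℓ:ℤ) ∣ R) (hS : ¬ (ℓ:ℤ) ∣ S)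
    (e : ℕ) (he : 1 ≤ e) (hd : ℓ ∣ ℓ^e) (y : ZMod ℓ) :
    Nat.card {u : (ZMod (ℓ^e))ˣ //
        (ZMod.castHom hd (ZMod ℓ)) ((R : ZMod (ℓ^e)) * (u : ZMod (ℓ^e)) + (S : ZMod (ℓ^e))) = y}
      = if y = (S : ZMod ℓ) then 0 else ℓ^(e-1) := by
  haveI : Fact ℓ.Prime := ⟨hℓ⟩
  haveI : NeZero (ℓ^e) := ⟨pow_ne_zero e hℓ.pos.ne'⟩
  have hRbar : (R : ZMod ℓ) ≠ 0 := by rw [Ne, ZMod.intCast_zmod_eq_zero_iff_dvd]; exact hR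
  have e2 : {u : (ZMod (ℓ^e))ˣ //
        (ZMod.castHom hd (ZMod ℓ)) ((R : ZMod (ℓ^e)) * (u : ZMod (ℓ^e)) + (S : ZMod (ℓ^e))) = y}
      ≃ {u : (ZMod (ℓ^e))ˣ //
        (ZMod.castHom hd (ZMod ℓ)) (u : ZMod (ℓ^e)) = (y - (S : ZMod ℓ)) / (R : ZMod ℓ)} :=
    Equiv.subtypeEquiv (Equiv.refl _) (fun u => by
      rw [Equiv.refl_apply, map_add, map_mul, map_intCast, map_intCast, eq_div_iff hRbar]
      constructor
      · intro h; linear_combination h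
      · intro h; linear_combination h)
  rw [Nat.card_congr e2, unitsFiberCard ℓ hℓ e he hd]
  have hcond : ((y - (S : ZMod ℓ)) / (R : ZMod ℓ) = 0) ↔ (y = (S : ZMod ℓ)) := by
    rw [div_eq_zero_iff, sub_eq_zero]
    simp [hRbar]
  rw [if_congr hcond rfl rfl]

lemma countOne (R S : ℤ) (ℓ : ℕ) (hℓ : ℓ.Prime) (hR : ¬ (ℓ:ℤ) ∣ R) (hS : ¬ (ℓ:ℤ) ∣ S)
    (e : ℕ) (he : 1 ≤ e) (hd : ℓ ∣ ℓ^e) (t : (ZMod (ℓ^e))ˣ) :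
    Nat.card {u : (ZMod (ℓ^e))ˣ //
        (R : ZMod (ℓ^e)) * (u : ZMod (ℓ^e)) + (S : ZMod (ℓ^e)) = (t : ZMod (ℓ^e))}
      = if (ZMod.castHom hd (ZMod ℓ)) (t : ZMod (ℓ^e)) = (S : ZMod ℓ) then 0 else 1 := by
  haveI : Fact ℓ.Prime := ⟨hℓ⟩
  haveI : NeZero (ℓ^e) := ⟨pow_ne_zero e hℓ.pos.ne'⟩
  have hRbar : (R : ZMod ℓ) ≠ 0 := by rw [Ne, ZMod.intCast_zmod_eq_zero_iff_dvd]; exact hR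
  have hRU : IsUnit (R : ZMod (ℓ^e)) := by
    rw [isUnitIffCast ℓ hℓ e he hd, map_intCast]
    exact hRbar
  obtain ⟨r, hr⟩ := hRU
  set x₀ : ZMod (ℓ^e) := ((r⁻¹ : (ZMod (ℓ^e))ˣ) : ZMod (ℓ^e)) * ((t : ZMod (ℓ^e)) - (S : ZMod (ℓ^e))) with hx₀
  have hiff : ∀ u : (ZMod (ℓ^e))ˣ,
      ((R : ZMod (ℓ^e)) * (u : ZMod (ℓ^e)) + (S : ZMod (ℓ^e)) = (t : ZMod (ℓ^e)))
        ↔ ((u : ZMod (ℓ^e)) = x₀) := by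
    intro u
    rw [← hr, hx₀]
    constructor
    · intro h
      rw [← h]
      rw [add_sub_cancel_right, Units.inv_mul_cancel_left]
    · intro h
      rw [h, Units.mul_inv_cancel_left, sub_add_cancel]
  have hcastx : (ZMod.castHom hd (ZMod ℓ)) x₀
      = ((r⁻¹ : (ZMod (ℓ^e))ˣ) : ZMod (ℓ^e)).cast * ((ZMod.castHom hd (ZMod ℓ)) (t : ZMod (ℓ^e)) - (S : ZMod ℓ)) := by
    rw [hx₀, map_mul, map_sub, map_intCast, ZMod.castHom_apply]
  have hrinv : ((ZMod.castHom hd (ZMod ℓ)) ((r⁻¹ : (ZMod (ℓ^e))ˣ) : ZMod (ℓ^e))) ≠ 0 := by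
    have : IsUnit ((ZMod.castHom hd (ZMod ℓ)) ((r⁻¹ : (ZMod (ℓ^e))ˣ) : ZMod (ℓ^e))) :=
      (r⁻¹).isUnit.map (ZMod.castHom hd (ZMod ℓ))
    exact this.ne_zero
  have hux : IsUnit x₀ ↔ ¬ ((ZMod.castHom hd (ZMod ℓ)) (t : ZMod (ℓ^e)) = (S : ZMod ℓ)) := by
    rw [isUnitIffCast ℓ hℓ e he hd, hx₀, map_mul, map_sub, map_intCast, mul_ne_zero_iff,
      and_iff_right hrinv, sub_ne_zero]
  by_cases hδ : (ZMod.castHom hd (ZMod ℓ)) (t : ZMod (ℓ^e)) = (S : ZMod ℓ)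
  · rw [if_pos hδ, Nat.card_eq_zero]
    left
    refine ⟨fun u => ?_⟩
    have h1 : IsUnit x₀ := (hiff u.1).mp u.2 ▸ u.1.isUnit
    exact (hux.mp h1) hδ
  · rw [if_neg hδ]
    have hx : IsUnit x₀ := hux.mpr hδ
    rw [Nat.card_eq_one_iff_unique]
    constructor
    · refine ⟨fun u v => Subtype.ext (Units.ext ?_)⟩
      rw [(hiff u.1).mp u.2, (hiff v.1).mp v.2]
    · exact ⟨⟨hx.unit, (hiff hx.unit).mpr hx.unit_spec⟩⟩

lemma keyFormula (R S : ℤ) (ℓ : ℕ) (hℓ : ℓ.Prime)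
    (hR : ¬ (ℓ:ℤ) ∣ R) (hS : ¬ (ℓ:ℤ) ∣ S) (e : ℕ) (he : 1 ≤ e) (hd : ℓ ∣ ℓ^e) :
    ∀ k : ℕ, 1 ≤ k → ∀ t : (ZMod (ℓ^e))ˣ,
    (Nat.totient (ℓ^e) : ℤ) *
        (Nat.card {v : Fin k → (ZMod (ℓ^e))ˣ //
          (∏ i, ((R : ZMod (ℓ^e)) * ((v i : (ZMod (ℓ^e))ˣ) : ZMod (ℓ^e)) + (S : ZMod (ℓ^e))))
            = (t : ZMod (ℓ^e))} : ℤ)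
      = ((Nat.totient (ℓ^e) : ℤ) - (ℓ:ℤ)^(e-1))^k - (-(ℓ:ℤ)^(e-1))^k
        + (-1)^k * ((ℓ:ℤ)^(e-1))^(k-1) * (Nat.totient (ℓ^e) : ℤ) *
          (if (ZMod.castHom hd (ZMod ℓ)) ((t : (ZMod (ℓ^e))ˣ) : ZMod (ℓ^e)) = ((S : ZMod ℓ))^k
            then 1 else 0) := by
  haveI : Fact ℓ.Prime := ⟨hℓ⟩
  haveI : NeZero (ℓ^e) := ⟨pow_ne_zero e hℓ.pos.ne'⟩
  have hSbar : (S : ZMod ℓ) ≠ 0 := by rw [Ne, ZMod.intCast_zmod_eq_zero_iff_dvd]; exact hS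
  have hle : ℓ^(e-1) ≤ Nat.totient (ℓ^e) := by
    rw [Nat.totient_prime_pow hℓ he]
    refine Nat.le_mul_of_pos_right _ ?_
    have := hℓ.two_le; omega
  intro k hk
  induction k, hk using Nat.le_induction with
  | base =>
    intro t
    have e2 : {v : Fin 1 → (ZMod (ℓ^e))ˣ //
          (∏ i, ((R : ZMod (ℓ^e)) * ((v i : (ZMod (ℓ^e))ˣ) : ZMod (ℓ^e)) + (S : ZMod (ℓ^e))))
            = (t : ZMod (ℓ^e))}
        ≃ {u : (ZMod (ℓ^e))ˣ //
            (R : ZMod (ℓ^e)) * (u : ZMod (ℓ^e)) + (S : ZMod (ℓ^e)) = (t : ZMod (ℓ^e))} :=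
      Equiv.subtypeEquiv (Equiv.funUnique (Fin 1) _) (fun v => by
        simp [Fin.prod_univ_one])
    rw [Nat.card_congr e2, countOne R S ℓ hℓ hR hS e he hd t]
    simp only [pow_one]
    split_ifs with h
    · push_cast
      norm_num
    · push_cast
      norm_num
  | succ k hk IH =>
    intro t
    have hzne : ((ZMod.castHom hd (ZMod ℓ)) ((t : (ZMod (ℓ^e))ˣ) : ZMod (ℓ^e))) ≠ 0 :=
      ((Units.isUnit t).map (ZMod.castHom hd (ZMod ℓ))).ne_zero
    have hSk : ((S : ZMod ℓ))^k ≠ 0 := pow_ne_zero k hSbar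
    have hz : (ZMod.castHom hd (ZMod ℓ)) ((t : (ZMod (ℓ^e))ˣ) : ZMod (ℓ^e)) * (((S : ZMod ℓ))^k)⁻¹ ≠ 0 :=
      mul_ne_zero hzne (inv_ne_zero hSk)
    have hstep : Nat.card {v : Fin (k+1) → (ZMod (ℓ^e))ˣ //
          (∏ i, ((R : ZMod (ℓ^e)) * ((v i : (ZMod (ℓ^e))ˣ) : ZMod (ℓ^e)) + (S : ZMod (ℓ^e))))
            = (t : ZMod (ℓ^e))}
        = ∑ u : (ZMod (ℓ^e))ˣ, Nat.card {g : Fin k → (ZMod (ℓ^e))ˣ //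
            ((R : ZMod (ℓ^e)) * (u : ZMod (ℓ^e)) + (S : ZMod (ℓ^e)))
              * (∏ i, ((R : ZMod (ℓ^e)) * ((g i : (ZMod (ℓ^e))ˣ) : ZMod (ℓ^e)) + (S : ZMod (ℓ^e))))
            = (t : ZMod (ℓ^e))} :=
      stepSum (c := fun u : (ZMod (ℓ^e))ˣ => (R : ZMod (ℓ^e)) * (u : ZMod (ℓ^e)) + (S : ZMod (ℓ^e)))
        ((t : ZMod (ℓ^e))) k
    rw [hstep]
    push_cast
    rw [Finset.mul_sum]
    have hper : ∀ u : (ZMod (ℓ^e))ˣ,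
        (Nat.totient (ℓ^e) : ℤ) * (Nat.card {g : Fin k → (ZMod (ℓ^e))ˣ //
            ((R : ZMod (ℓ^e)) * (u : ZMod (ℓ^e)) + (S : ZMod (ℓ^e)))
              * (∏ i, ((R : ZMod (ℓ^e)) * ((g i : (ZMod (ℓ^e))ˣ) : ZMod (ℓ^e)) + (S : ZMod (ℓ^e))))
            = (t : ZMod (ℓ^e))} : ℤ)
        = (if (ZMod.castHom hd (ZMod ℓ)) ((R : ZMod (ℓ^e)) * (u : ZMod (ℓ^e)) + (S : ZMod (ℓ^e))) = 0
            then 0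
            else (((Nat.totient (ℓ^e) : ℤ) - (ℓ:ℤ)^(e-1))^k - (-(ℓ:ℤ)^(e-1))^k))
          + (if (ZMod.castHom hd (ZMod ℓ)) ((R : ZMod (ℓ^e)) * (u : ZMod (ℓ^e)) + (S : ZMod (ℓ^e)))
                = (ZMod.castHom hd (ZMod ℓ)) ((t : (ZMod (ℓ^e))ˣ) : ZMod (ℓ^e)) * (((S : ZMod ℓ))^k)⁻¹
              then (-1)^k * ((ℓ:ℤ)^(e-1))^(k-1) * (Nat.totient (ℓ^e) : ℤ) else 0) := by
      intro u
      by_cases hcu : (ZMod.castHom hd (ZMod ℓ)) ((R : ZMod (ℓ^e)) * (u : ZMod (ℓ^e)) + (S : ZMod (ℓ^e))) = 0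
      · haveI hempty : IsEmpty {g : Fin k → (ZMod (ℓ^e))ˣ //
            ((R : ZMod (ℓ^e)) * (u : ZMod (ℓ^e)) + (S : ZMod (ℓ^e)))
              * (∏ i, ((R : ZMod (ℓ^e)) * ((g i : (ZMod (ℓ^e))ˣ) : ZMod (ℓ^e)) + (S : ZMod (ℓ^e))))
            = (t : ZMod (ℓ^e))} := by
          refine ⟨fun g => ?_⟩
          have h1 : IsUnit ((R : ZMod (ℓ^e)) * (u : ZMod (ℓ^e)) + (S : ZMod (ℓ^e))) :=
            isUnit_of_mul_isUnit_left (g.2 ▸ Units.isUnit t)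
          exact ((isUnitIffCast ℓ hℓ e he hd _).mp h1) hcu
        have hne : ¬ ((ZMod.castHom hd (ZMod ℓ)) ((R : ZMod (ℓ^e)) * (u : ZMod (ℓ^e)) + (S : ZMod (ℓ^e)))
            = (ZMod.castHom hd (ZMod ℓ)) ((t : (ZMod (ℓ^e))ˣ) : ZMod (ℓ^e)) * (((S : ZMod ℓ))^k)⁻¹) := by
          intro h
          rw [hcu] at h
          exact hz h.symm
        rw [if_pos hcu, if_neg hne, Nat.card_of_isEmpty, Nat.cast_zero, mul_zero, add_zero]
      · have hu : IsUnit ((R : ZMod (ℓ^e)) * (u : ZMod (ℓ^e)) + (S : ZMod (ℓ^e))) :=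
          (isUnitIffCast ℓ hℓ e he hd _).mpr hcu
        obtain ⟨cu, hcu'⟩ := hu
        have e3 : {g : Fin k → (ZMod (ℓ^e))ˣ //
            ((R : ZMod (ℓ^e)) * (u : ZMod (ℓ^e)) + (S : ZMod (ℓ^e)))
              * (∏ i, ((R : ZMod (ℓ^e)) * ((g i : (ZMod (ℓ^e))ˣ) : ZMod (ℓ^e)) + (S : ZMod (ℓ^e))))
            = (t : ZMod (ℓ^e))}
          ≃ {g : Fin k → (ZMod (ℓ^e))ˣ //
            (∏ i, ((R : ZMod (ℓ^e)) * ((g i : (ZMod (ℓ^e))ˣ) : ZMod (ℓ^e)) + (S : ZMod (ℓ^e))))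
            = ((cu⁻¹ * t : (ZMod (ℓ^e))ˣ) : ZMod (ℓ^e))} :=
          Equiv.subtypeEquiv (Equiv.refl _) (fun g => by
            rw [Equiv.refl_apply, ← hcu', Units.val_mul]
            constructor
            · intro h
              rw [← h, ← mul_assoc, Units.inv_mul, one_mul]
            · intro h
              rw [h, ← mul_assoc, Units.mul_inv, one_mul])
        rw [Nat.card_congr e3, IH (cu⁻¹ * t), if_neg hcu]
        have ha : (ZMod.castHom hd (ZMod ℓ)) ((cu : (ZMod (ℓ^e))ˣ) : ZMod (ℓ^e)) ≠ 0 := by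
          rw [hcu']; exact hcu
        have hinv : (ZMod.castHom hd (ZMod ℓ)) ((cu⁻¹ : (ZMod (ℓ^e))ˣ) : ZMod (ℓ^e))
            = ((ZMod.castHom hd (ZMod ℓ)) ((cu : (ZMod (ℓ^e))ˣ) : ZMod (ℓ^e)))⁻¹ := by
          refine eq_inv_of_mul_eq_one_left ?_
          rw [← map_mul, ← Units.val_mul, inv_mul_cancel, Units.val_one, map_one]
        have hcond : ((ZMod.castHom hd (ZMod ℓ)) ((cu⁻¹ * t : (ZMod (ℓ^e))ˣ) : ZMod (ℓ^e))
              = ((S : ZMod ℓ))^k)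
            ↔ ((ZMod.castHom hd (ZMod ℓ)) ((R : ZMod (ℓ^e)) * (u : ZMod (ℓ^e)) + (S : ZMod (ℓ^e)))
              = (ZMod.castHom hd (ZMod ℓ)) ((t : (ZMod (ℓ^e))ˣ) : ZMod (ℓ^e)) * (((S : ZMod ℓ))^k)⁻¹) := by
          rw [← hcu', Units.val_mul, map_mul, hinv,
            inv_mul_eq_iff_eq_mul₀ ha, eq_comm, ← eq_div_iff hSk, div_eq_mul_inv, eq_comm]
        rw [mul_ite, mul_one, mul_zero, if_congr hcond rfl rfl]
    rw [Finset.sum_congr rfl (fun u _ => hper u), Finset.sum_add_distrib]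
    have hc0 : (Finset.univ.filter (fun u : (ZMod (ℓ^e))ˣ =>
          ¬ ((ZMod.castHom hd (ZMod ℓ)) ((R : ZMod (ℓ^e)) * (u : ZMod (ℓ^e)) + (S : ZMod (ℓ^e))) = 0))).card
        = Nat.totient (ℓ^e) - ℓ^(e-1) := by
      rw [← Fintype.card_subtype, Fintype.card_subtype_compl, ZMod.card_units_eq_totient]
      congr 1
      rw [← Nat.card_eq_fintype_card, countC R S ℓ hℓ hR hS e he hd 0,
        if_neg (fun h => hSbar h.symm)]
    have hc1 : (Finset.univ.filter (fun u : (ZMod (ℓ^e))ˣ =>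
          (ZMod.castHom hd (ZMod ℓ)) ((R : ZMod (ℓ^e)) * (u : ZMod (ℓ^e)) + (S : ZMod (ℓ^e)))
            = (ZMod.castHom hd (ZMod ℓ)) ((t : (ZMod (ℓ^e))ˣ) : ZMod (ℓ^e)) * (((S : ZMod ℓ))^k)⁻¹)).card
        = if (ZMod.castHom hd (ZMod ℓ)) ((t : (ZMod (ℓ^e))ˣ) : ZMod (ℓ^e)) * (((S : ZMod ℓ))^k)⁻¹
            = (S : ZMod ℓ) then 0 else ℓ^(e-1) := by
      rw [← Fintype.card_subtype, ← Nat.card_eq_fintype_card, countC R S ℓ hℓ hR hS e he hd]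
    rw [Finset.sum_ite, Finset.sum_const, Finset.sum_const, smul_zero, zero_add,
      Finset.sum_ite, Finset.sum_const, Finset.sum_const, smul_zero, add_zero, hc0, hc1]
    have hzS : ((ZMod.castHom hd (ZMod ℓ)) ((t : (ZMod (ℓ^e))ˣ) : ZMod (ℓ^e)) * (((S : ZMod ℓ))^k)⁻¹
          = (S : ZMod ℓ))
        ↔ ((ZMod.castHom hd (ZMod ℓ)) ((t : (ZMod (ℓ^e))ˣ) : ZMod (ℓ^e)) = ((S : ZMod ℓ))^(k+1)) := by
      rw [mul_inv_eq_iff_eq_mul₀ hSk, ← pow_succ']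
    have hePk : (e-1) + (e-1)*(k-1) = (e-1)*k := by
      conv_rhs => rw [← Nat.sub_add_cancel hk, Nat.mul_succ]
      rw [Nat.add_comm]
    have hPk' : (ℓ:ℤ)^((e-1)*k) = (ℓ:ℤ)^(e-1) * (ℓ:ℤ)^((e-1)*(k-1)) := by
      rw [← pow_add, hePk]
    have hcast : ((Nat.totient (ℓ^e) - ℓ^(e-1) : ℕ) : ℤ) = (Nat.totient (ℓ^e) : ℤ) - (ℓ:ℤ)^(e-1) := by
      push_cast [Nat.cast_sub hle]
      ring
    rw [nsmul_eq_mul, nsmul_eq_mul, hcast]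
    by_cases hδ : (ZMod.castHom hd (ZMod ℓ)) ((t : (ZMod (ℓ^e))ˣ) : ZMod (ℓ^e)) = ((S : ZMod ℓ))^(k+1)
    · rw [if_pos (hzS.mpr hδ), if_pos hδ]
      push_cast
      ring_nf
      try simp only [hPk']
      try ring
    · rw [if_neg (fun h => hδ (hzS.mp h)), if_neg hδ]
      push_cast
      ring_nf
      try simp only [hPk']
      try ring



/-- **Equation (4.3).** For an odd prime `ℓ` with `ℓ ∤ RS`, the number `V` of tuples
`(v₁, …, v_J)` of units mod `ℓ^e` with `∏ (R vᵢ + S) ≡ w (mod ℓ^e)` satisfies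
`|φ(ℓ^e) V − (φ(ℓ^e) − ℓ^{e-1})^J| ≤ 2 ℓ^e (ℓ^{e-1})^{J-1}`. -/
theorem stmt13 (R S : ℤ) (ℓ : ℕ) (hℓ : ℓ.Prime) (hodd : ℓ ≠ 2)
    (hRS : ¬ (ℓ : ℤ) ∣ R * S)
    (e J : ℕ) (he : 1 ≤ e) (hJ : 1 ≤ J) (w : (ZMod (ℓ ^ e))ˣ) :
    |(Nat.totient (ℓ ^ e) : ℝ) *
        (Set.ncard {v : Fin J → (ZMod (ℓ ^ e))ˣ |
          ∏ i, ((R : ZMod (ℓ ^ e)) * ((v i : (ZMod (ℓ ^ e))ˣ) : ZMod (ℓ ^ e))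
              + (S : ZMod (ℓ ^ e))) = (w : ZMod (ℓ ^ e))} : ℝ)
      - ((Nat.totient (ℓ ^ e) : ℝ) - (ℓ : ℝ) ^ (e - 1)) ^ J|
      ≤ 2 * (ℓ : ℝ) ^ e * ((ℓ : ℝ) ^ (e - 1)) ^ (J - 1) := by
  haveI : Fact ℓ.Prime := ⟨hℓ⟩
  haveI : NeZero (ℓ^e) := ⟨pow_ne_zero e hℓ.pos.ne'⟩
  have hR : ¬ (ℓ:ℤ) ∣ R := fun h => hRS (h.mul_right S)
  have hS : ¬ (ℓ:ℤ) ∣ S := fun h => hRS (h.mul_left R)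
  have hd : ℓ ∣ ℓ^e := dvd_pow_self ℓ (Nat.one_le_iff_ne_zero.mp he)
  have key := keyFormula R S ℓ hℓ hR hS e he hd J hJ w
  have hncard : Set.ncard {v : Fin J → (ZMod (ℓ ^ e))ˣ |
          ∏ i, ((R : ZMod (ℓ ^ e)) * ((v i : (ZMod (ℓ ^ e))ˣ) : ZMod (ℓ ^ e))
              + (S : ZMod (ℓ ^ e))) = (w : ZMod (ℓ ^ e))}
      = Nat.card {v : Fin J → (ZMod (ℓ ^ e))ˣ //
          (∏ i, ((R : ZMod (ℓ ^ e)) * ((v i : (ZMod (ℓ ^ e))ˣ) : ZMod (ℓ ^ e)) + (S : ZMod (ℓ ^ e))))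
            = (w : ZMod (ℓ ^ e))} := (Nat.card_coe_set_eq _).symm
  rw [hncard]
  have keyR := congrArg (fun x : ℤ => (x : ℝ)) key
  push_cast [apply_ite (fun x : ℤ => (x : ℝ))] at keyR
  have hre : (Nat.totient (ℓ ^ e) : ℝ) *
        (Nat.card {v : Fin J → (ZMod (ℓ ^ e))ˣ //
          (∏ i, ((R : ZMod (ℓ ^ e)) * ((v i : (ZMod (ℓ ^ e))ˣ) : ZMod (ℓ ^ e)) + (S : ZMod (ℓ ^ e))))
            = (w : ZMod (ℓ ^ e))} : ℝ)
      - ((Nat.totient (ℓ ^ e) : ℝ) - (ℓ : ℝ) ^ (e - 1)) ^ J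
      = - (-(ℓ:ℝ)^(e-1))^J + (-1)^J * ((ℓ:ℝ)^(e-1))^(J-1) * (Nat.totient (ℓ^e) : ℝ) *
          (if (ZMod.castHom hd (ZMod ℓ)) ((w : (ZMod (ℓ^e))ˣ) : ZMod (ℓ^e)) = ((S : ZMod ℓ))^J
            then 1 else 0) := by
    rw [keyR]; ring
  rw [hre]
  have hP0 : (0:ℝ) ≤ (ℓ:ℝ)^(e-1) := by positivity
  have hPJ0 : (0:ℝ) ≤ ((ℓ:ℝ)^(e-1))^(J-1) := by positivity
  have hT0 : (0:ℝ) ≤ (Nat.totient (ℓ^e) : ℝ) := by positivity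
  have hPle : (ℓ:ℝ)^(e-1) ≤ (ℓ:ℝ)^e :=
    pow_le_pow_right₀ (by exact_mod_cast hℓ.one_lt.le) (Nat.sub_le e 1)
  have hTle : ((Nat.totient (ℓ^e)) : ℝ) ≤ (ℓ:ℝ)^e := by
    have := Nat.totient_le (ℓ^e)
    calc ((Nat.totient (ℓ^e)) : ℝ) ≤ ((ℓ^e : ℕ) : ℝ) := by exact_mod_cast this
      _ = (ℓ:ℝ)^e := by push_cast; ring
  have hPJ : ((ℓ:ℝ)^(e-1))^J = ((ℓ:ℝ)^(e-1))^(J-1) * (ℓ:ℝ)^(e-1) := by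
    conv_lhs => rw [← Nat.sub_add_cancel hJ]
    rw [pow_succ]
  have habs1 : |(-(-(ℓ:ℝ)^(e-1))^J)| = ((ℓ:ℝ)^(e-1))^J := by
    rw [abs_neg, abs_pow, abs_neg, abs_of_nonneg hP0]
  split_ifs with hδ
  · rw [mul_one]
    calc |(-(-(ℓ:ℝ)^(e-1))^J) + (-1)^J * ((ℓ:ℝ)^(e-1))^(J-1) * (Nat.totient (ℓ^e) : ℝ)|
        ≤ |(-(-(ℓ:ℝ)^(e-1))^J)| + |(-1 : ℝ)^J * ((ℓ:ℝ)^(e-1))^(J-1) * (Nat.totient (ℓ^e) : ℝ)| :=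
          abs_add_le _ _
      _ = ((ℓ:ℝ)^(e-1))^J + ((ℓ:ℝ)^(e-1))^(J-1) * (Nat.totient (ℓ^e) : ℝ) := by
          rw [habs1, abs_mul, abs_mul, abs_pow, abs_neg, abs_one, one_pow, one_mul,
            abs_of_nonneg hPJ0, abs_of_nonneg hT0]
      _ ≤ 2 * (ℓ : ℝ) ^ e * ((ℓ : ℝ) ^ (e - 1)) ^ (J - 1) := by
          rw [hPJ]
          nlinarith [mul_le_mul_of_nonneg_left hPle hPJ0, mul_le_mul_of_nonneg_left hTle hPJ0]
  · rw [mul_zero, add_zero, habs1, hPJ]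
    have hl0 : (0:ℝ) < (ℓ:ℝ) := by exact_mod_cast hℓ.pos
    nlinarith [mul_le_mul_of_nonneg_left hPle hPJ0, pow_pos hl0 e, pow_pos hl0 (e-1)]
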